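/- Let n ≥ 1 and 0 ≤ p ≤ n be integers, and let d, ξ : {1,…,n} → ℝ. Write a² = ∑_i ξ_i², T = ∑_i d_i ξ_i², D = ∑_i d_i, Q = ∑_i d_i², R = ∑_i d_i² ξ_i², and for a subset I set S_ξ(I) = ∑_i sgn_I(i) ξ_i² and S_d(I) = ∑_j sgn_I(j) d_j. Then the sum over all subsets I of {1,…,n} of cardinality p of [ (−T + S_ξ(I)·S_d(I))² + 4·∑_{i∈I} ∑_{k∉I} ξ_i² ξ_k² ( S_d(I)² − (d_k − d_i)² ) ] equals C(n,p)·T² − 2(C(n,p) − 4C(n−2,p−1))·a²·T·D + (C(n,p) − 4C(n−2,p−1))·a⁴·D² + 4C(n−2,p−1)·a⁴·Q − 8C(n−2,p−1)·a²·R. -/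
import Mathlib

/-- Binomial coefficient with the convention `C a b = 0` if `b < 0` or `b > a`. -/
def C (a b : ℤ) : ℤ := if 0 ≤ b ∧ b ≤ a then (a.toNat.choose b.toNat : ℤ) else 0

/-- `sgn_I(j) = 1` if `j ∈ I` and `-1` otherwise. -/
def sgn {n : ℕ} (I : Finset (Fin n)) (j : Fin n) : ℝ := if j ∈ I then 1 else -1

lemma cnt_nat {n p : ℕ} {i k : Fin n} (hik : i ≠ k) (hp1 : 1 ≤ p) :
    ((Finset.powersetCard p (Finset.univ : Finset (Fin n))).filter
      (fun I => i ∈ I ∧ k ∉ I)).card = (n - 2).choose (p - 1) := by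
  have hcard : (((Finset.univ : Finset (Fin n)).erase k).erase i).card = n - 2 := by
    rw [Finset.card_erase_of_mem (Finset.mem_erase.2 ⟨hik, Finset.mem_univ i⟩),
      Finset.card_erase_of_mem (Finset.mem_univ k), Finset.card_univ, Fintype.card_fin]
    omega
  rw [← hcard, ← Finset.card_powersetCard]
  refine Finset.card_bij' (fun I _ => I.erase i) (fun J _ => insert i J) ?hi ?hj ?li ?ri
  case hi =>
    intro I hI
    simp only [Finset.mem_filter, Finset.mem_powersetCard] at hI
    obtain ⟨⟨-, hIc⟩, hiI, hkI⟩ := hI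
    simp only [Finset.mem_powersetCard]
    constructor
    · intro x hx
      simp only [Finset.mem_erase] at hx ⊢
      exact ⟨hx.1, fun h => hkI (h ▸ hx.2), Finset.mem_univ x⟩
    · rw [Finset.card_erase_of_mem hiI, hIc]
  case hj =>
    intro J hJ
    simp only [Finset.mem_powersetCard] at hJ
    obtain ⟨hJs, hJc⟩ := hJ
    have hiJ : i ∉ J := fun h => ((Finset.mem_erase.1 (hJs h)).1) rfl
    have hkJ : k ∉ J := fun h => ((Finset.mem_erase.1 ((Finset.erase_subset _ _) (hJs h))).1) rfl
    simp only [Finset.mem_filter, Finset.mem_powersetCard]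
    refine ⟨⟨Finset.subset_univ _, ?_⟩, Finset.mem_insert_self i J, ?_⟩
    · rw [Finset.card_insert_of_notMem hiJ, hJc]
      omega
    · simp only [Finset.mem_insert]
      rintro (h | h)
      · exact hik h.symm
      · exact hkJ h
  case li =>
    intro I hI
    simp only [Finset.mem_filter] at hI
    exact Finset.insert_erase hI.2.1
  case ri =>
    intro J hJ
    simp only [Finset.mem_powersetCard] at hJ
    have hiJ : i ∉ J := fun h => ((Finset.mem_erase.1 (hJ.1 h)).1) rfl
    exact Finset.erase_insert hiJ

lemma cnt_int {n p : ℕ} {i k : Fin n} (hik : i ≠ k) :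
    (((Finset.powersetCard p (Finset.univ : Finset (Fin n))).filter
      (fun I => i ∈ I ∧ k ∉ I)).card : ℤ) = C ((n : ℤ) - 2) ((p : ℤ) - 1) := by
  have hn2 : 2 ≤ n := by
    have h1 := i.isLt
    have h2 := k.isLt
    have h3 : i.val ≠ k.val := fun h => hik (Fin.ext h)
    omega
  rcases Nat.eq_zero_or_pos p with rfl | hp1
  · have h0 : ((Finset.powersetCard 0 (Finset.univ : Finset (Fin n))).filter
        (fun I => i ∈ I ∧ k ∉ I)) = ∅ := by
      apply Finset.filter_false_of_mem
      intro I hI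
      simp only [Finset.mem_powersetCard, Finset.card_eq_zero] at hI
      rw [hI.2]
      simp
    rw [h0]
    unfold C
    rw [if_neg (by omega)]
    simp
  · rw [cnt_nat hik hp1]
    unfold C
    rcases le_or_gt p (n - 1) with hpn | hpn
    · rw [if_pos (by omega)]
      have e1 : ((n : ℤ) - 2).toNat = n - 2 := by omega
      have e2 : ((p : ℤ) - 1).toNat = p - 1 := by omega
      rw [e1, e2]
    · rw [Nat.choose_eq_zero_of_lt (by omega), if_neg (by omega)]
      simp


lemma C_np (n p : ℕ) : C (n : ℤ) (p : ℤ) = (n.choose p : ℤ) := by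
  unfold C
  rcases le_or_gt p n with h | h
  · rw [if_pos (by omega)]
    norm_num
  · rw [Nat.choose_eq_zero_of_lt h, if_neg (by omega)]
    simp

lemma sgn_prod_ne {n : ℕ} (I : Finset (Fin n)) {a b : Fin n} (hab : a ≠ b) :
    sgn I a * sgn I b = 1 - 2 * (if a ∈ I ∧ b ∉ I then (1 : ℝ) else 0)
      - 2 * (if b ∈ I ∧ a ∉ I then (1 : ℝ) else 0) := by
  unfold sgn
  by_cases h1 : a ∈ I <;> by_cases h2 : b ∈ I <;> simp [h1, h2] <;> norm_num

lemma sum_sgn_prod {n p : ℕ} (a b : Fin n) :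
    ∑ I ∈ Finset.powersetCard p (Finset.univ : Finset (Fin n)), sgn I a * sgn I b
      = if a = b then ((C (n : ℤ) (p : ℤ) : ℝ))
        else ((C (n : ℤ) (p : ℤ) : ℝ) - 4 * (C ((n : ℤ) - 2) ((p : ℤ) - 1) : ℝ)) := by
  have hN : ((Finset.powersetCard p (Finset.univ : Finset (Fin n))).card : ℝ)
      = (C (n : ℤ) (p : ℤ) : ℝ) := by
    rw [Finset.card_powersetCard, Finset.card_univ, Fintype.card_fin, C_np]
    push_cast
    ring
  rcases eq_or_ne a b with rfl | hab
  · rw [if_pos rfl]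
    rw [Finset.sum_congr rfl (fun I _ => by unfold sgn; split_ifs <;> norm_num :
      ∀ I ∈ Finset.powersetCard p (Finset.univ : Finset (Fin n)), sgn I a * sgn I a = 1)]
    rw [Finset.sum_const, nsmul_eq_mul, mul_one, hN]
  · rw [if_neg hab]
    rw [Finset.sum_congr rfl (fun I _ => sgn_prod_ne I hab)]
    rw [Finset.sum_sub_distrib, Finset.sum_sub_distrib, Finset.sum_const,
      ← Finset.mul_sum, ← Finset.mul_sum, Finset.sum_boole, Finset.sum_boole]
    have r1 : (((Finset.powersetCard p (Finset.univ : Finset (Fin n))).filter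
        (fun I => a ∈ I ∧ b ∉ I)).card : ℝ) = (C ((n : ℤ) - 2) ((p : ℤ) - 1) : ℝ) := by
      exact_mod_cast congrArg (Int.cast : ℤ → ℝ) (cnt_int hab)
    have r2 : (((Finset.powersetCard p (Finset.univ : Finset (Fin n))).filter
        (fun I => b ∈ I ∧ a ∉ I)).card : ℝ) = (C ((n : ℤ) - 2) ((p : ℤ) - 1) : ℝ) := by
      exact_mod_cast congrArg (Int.cast : ℤ → ℝ) (cnt_int hab.symm)
    rw [r1, r2, nsmul_eq_mul, mul_one, hN]
    ring


lemma sum_prod_lemma {n p : ℕ} (f g : Fin n → ℝ) :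
    ∑ I ∈ Finset.powersetCard p (Finset.univ : Finset (Fin n)),
        (∑ a, sgn I a * f a) * (∑ b, sgn I b * g b)
      = ((C (n : ℤ) (p : ℤ) : ℝ) - 4 * (C ((n : ℤ) - 2) ((p : ℤ) - 1) : ℝ)) *
          ((∑ a, f a) * (∑ b, g b))
        + 4 * (C ((n : ℤ) - 2) ((p : ℤ) - 1) : ℝ) * (∑ a, f a * g a) := by
  set N := (C (n : ℤ) (p : ℤ) : ℝ) with hNdef
  set M := (C ((n : ℤ) - 2) ((p : ℤ) - 1) : ℝ) with hMdef
  have h1 : ∀ I : Finset (Fin n), (∑ a, sgn I a * f a) * (∑ b, sgn I b * g b)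
      = ∑ a, ∑ b, (sgn I a * sgn I b) * (f a * g b) := by
    intro I
    rw [Finset.sum_mul_sum]
    exact Finset.sum_congr rfl fun a _ => Finset.sum_congr rfl fun b _ => by ring
  rw [Finset.sum_congr rfl fun I _ => h1 I, Finset.sum_comm]
  have h2 : ∀ a : Fin n, ∑ I ∈ Finset.powersetCard p (Finset.univ : Finset (Fin n)),
      ∑ b, (sgn I a * sgn I b) * (f a * g b)
      = ∑ b, (if a = b then N else N - 4 * M) * (f a * g b) := by
    intro a
    rw [Finset.sum_comm]
    refine Finset.sum_congr rfl fun b _ => ?_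
    rw [← Finset.sum_mul, sum_sgn_prod a b]
  rw [Finset.sum_congr rfl fun a _ => h2 a]
  have h3 : ∀ a : Fin n, ∑ b, (if a = b then N else N - 4 * M) * (f a * g b)
      = (N - 4 * M) * (f a * (∑ b, g b)) + 4 * M * (f a * g a) := by
    intro a
    have : ∀ b : Fin n, (if a = b then N else N - 4 * M) * (f a * g b)
        = (N - 4 * M) * (f a * g b) + (if a = b then 4 * M * (f a * g b) else 0) := by
      intro b
      split_ifs <;> ring
    rw [Finset.sum_congr rfl fun b _ => this b, Finset.sum_add_distrib,
      Finset.sum_ite_eq Finset.univ a (fun b => 4 * M * (f a * g b)),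
      if_pos (Finset.mem_univ a), ← Finset.mul_sum, ← Finset.mul_sum]
  rw [Finset.sum_congr rfl fun a _ => h3 a, Finset.sum_add_distrib,
    ← Finset.mul_sum, ← Finset.mul_sum, ← Finset.sum_mul]

lemma sum_pairs {n p : ℕ} (w : Fin n → Fin n → ℝ) (hw : ∀ i, w i i = 0) :
    ∑ I ∈ Finset.powersetCard p (Finset.univ : Finset (Fin n)),
        ∑ i ∈ I, ∑ k ∈ Iᶜ, w i k
      = (C ((n : ℤ) - 2) ((p : ℤ) - 1) : ℝ) * ∑ i, ∑ k, w i k := by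
  set M := (C ((n : ℤ) - 2) ((p : ℤ) - 1) : ℝ) with hMdef
  have h1 : ∀ I : Finset (Fin n), ∑ i ∈ I, ∑ k ∈ Iᶜ, w i k
      = ∑ i, ∑ k, if i ∈ I ∧ k ∉ I then w i k else 0 := by
    intro I
    have inner : ∀ i : Fin n, (∑ k ∈ Iᶜ, w i k) = ∑ k, if k ∉ I then w i k else 0 := by
      intro i
      rw [show (∑ k, if k ∉ I then w i k else 0) = ∑ k ∈ Finset.univ ∩ Iᶜ, w i k by
        rw [← Finset.sum_ite_mem]
        exact Finset.sum_congr rfl fun k _ => by simp [Finset.mem_compl]]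
      rw [Finset.univ_inter]
    have outer : (∑ i ∈ I, ∑ k ∈ Iᶜ, w i k)
        = ∑ i, if i ∈ I then (∑ k ∈ Iᶜ, w i k) else 0 := by
      rw [show (∑ i, if i ∈ I then (∑ k ∈ Iᶜ, w i k) else 0)
          = ∑ i ∈ Finset.univ ∩ I, ∑ k ∈ Iᶜ, w i k from Finset.sum_ite_mem _ _ _]
      rw [Finset.univ_inter]
    rw [outer]
    refine Finset.sum_congr rfl fun i _ => ?_
    split_ifs with h
    · rw [inner i]
      exact Finset.sum_congr rfl fun k _ => by simp [h]
    · symm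
      exact Finset.sum_eq_zero fun k _ => by simp [h]
  rw [Finset.sum_congr rfl fun I _ => h1 I, Finset.sum_comm]
  have h2 : ∀ i : Fin n, ∑ I ∈ Finset.powersetCard p (Finset.univ : Finset (Fin n)),
      ∑ k, (if i ∈ I ∧ k ∉ I then w i k else 0) = ∑ k, M * w i k := by
    intro i
    rw [Finset.sum_comm]
    refine Finset.sum_congr rfl fun k _ => ?_
    rw [Finset.sum_ite, Finset.sum_const, Finset.sum_const_zero, add_zero, nsmul_eq_mul]
    rcases eq_or_ne i k with rfl | hik
    · rw [hw i, mul_zero, mul_zero]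
    · congr 1
      rw [hMdef]
      exact_mod_cast congrArg (Int.cast : ℤ → ℝ) (cnt_int hik)
  rw [Finset.sum_congr rfl fun i _ => h2 i, Finset.mul_sum]
  exact Finset.sum_congr rfl fun i _ => (Finset.mul_sum _ _ _).symm


theorem stmt12 (n p : ℕ) (hn : 1 ≤ n) (hp : p ≤ n) (d ξ : Fin n → ℝ) :
    ∑ I ∈ Finset.powersetCard p (Finset.univ : Finset (Fin n)),
        ((-(∑ i, d i * ξ i ^ 2) + (∑ i, sgn I i * ξ i ^ 2) * (∑ j, sgn I j * d j)) ^ 2 +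
          4 * ∑ i ∈ I, ∑ k ∈ Iᶜ,
            ξ i ^ 2 * ξ k ^ 2 * ((∑ j, sgn I j * d j) ^ 2 - (d k - d i) ^ 2)) =
      (C (n : ℤ) (p : ℤ) : ℝ) * (∑ i, d i * ξ i ^ 2) ^ 2 -
        2 * ((C (n : ℤ) (p : ℤ) : ℝ) - 4 * (C ((n : ℤ) - 2) ((p : ℤ) - 1) : ℝ)) *
          (∑ i, ξ i ^ 2) * (∑ i, d i * ξ i ^ 2) * (∑ i, d i) +
        ((C (n : ℤ) (p : ℤ) : ℝ) - 4 * (C ((n : ℤ) - 2) ((p : ℤ) - 1) : ℝ)) *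
          (∑ i, ξ i ^ 2) ^ 2 * (∑ i, d i) ^ 2 +
        4 * (C ((n : ℤ) - 2) ((p : ℤ) - 1) : ℝ) * (∑ i, ξ i ^ 2) ^ 2 * (∑ i, d i ^ 2) -
        8 * (C ((n : ℤ) - 2) ((p : ℤ) - 1) : ℝ) * (∑ i, ξ i ^ 2) *
          (∑ i, d i ^ 2 * ξ i ^ 2) := by
  have step1 : ∀ I ∈ Finset.powersetCard p (Finset.univ : Finset (Fin n)),
      ((-(∑ i, d i * ξ i ^ 2) + (∑ i, sgn I i * ξ i ^ 2) * (∑ j, sgn I j * d j)) ^ 2 +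
          4 * ∑ i ∈ I, ∑ k ∈ Iᶜ,
            ξ i ^ 2 * ξ k ^ 2 * ((∑ j, sgn I j * d j) ^ 2 - (d k - d i) ^ 2))
      = (∑ i, d i * ξ i ^ 2) ^ 2
        + (-2 * (∑ i, d i * ξ i ^ 2)) *
            ((∑ i, sgn I i * ξ i ^ 2) * (∑ j, sgn I j * d j))
        + ((∑ i, ξ i ^ 2) * (∑ i, ξ i ^ 2)) *
            ((∑ j, sgn I j * d j) * (∑ j, sgn I j * d j))
        + (-4) * (∑ i ∈ I, ∑ k ∈ Iᶜ, ξ i ^ 2 * ξ k ^ 2 * (d k - d i) ^ 2) := by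
    intro I _
    have hA : (∑ i, ξ i ^ 2) = (∑ i ∈ I, ξ i ^ 2) + (∑ i ∈ Iᶜ, ξ i ^ 2) :=
      (Finset.sum_add_sum_compl I _).symm
    have hS : (∑ i, sgn I i * ξ i ^ 2)
        = (∑ i ∈ I, ξ i ^ 2) - (∑ i ∈ Iᶜ, ξ i ^ 2) := by
      rw [← Finset.sum_add_sum_compl I (fun i => sgn I i * ξ i ^ 2)]
      have e1 : ∑ i ∈ I, sgn I i * ξ i ^ 2 = ∑ i ∈ I, ξ i ^ 2 :=
        Finset.sum_congr rfl fun i hi => by unfold sgn; rw [if_pos hi, one_mul]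
      have e2 : ∑ i ∈ Iᶜ, sgn I i * ξ i ^ 2 = -(∑ i ∈ Iᶜ, ξ i ^ 2) := by
        rw [← Finset.sum_neg_distrib]
        exact Finset.sum_congr rfl fun i hi => by
          unfold sgn; rw [if_neg (Finset.mem_compl.1 hi), neg_one_mul]
      rw [e1, e2]
      ring
    have hE : ∑ i ∈ I, ∑ k ∈ Iᶜ,
          ξ i ^ 2 * ξ k ^ 2 * ((∑ j, sgn I j * d j) ^ 2 - (d k - d i) ^ 2)
        = (∑ j, sgn I j * d j) ^ 2 * ((∑ i ∈ I, ξ i ^ 2) * (∑ k ∈ Iᶜ, ξ k ^ 2))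
          - ∑ i ∈ I, ∑ k ∈ Iᶜ, ξ i ^ 2 * ξ k ^ 2 * (d k - d i) ^ 2 := by
      have inner : ∀ i ∈ I, ∑ k ∈ Iᶜ,
            ξ i ^ 2 * ξ k ^ 2 * ((∑ j, sgn I j * d j) ^ 2 - (d k - d i) ^ 2)
          = (∑ j, sgn I j * d j) ^ 2 * (ξ i ^ 2 * (∑ k ∈ Iᶜ, ξ k ^ 2))
            - ∑ k ∈ Iᶜ, ξ i ^ 2 * ξ k ^ 2 * (d k - d i) ^ 2 := by
        intro i _
        rw [Finset.mul_sum, Finset.mul_sum, ← Finset.sum_sub_distrib]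
        exact Finset.sum_congr rfl fun k _ => by ring
      rw [Finset.sum_congr rfl inner, Finset.sum_sub_distrib, ← Finset.mul_sum,
        ← Finset.sum_mul]
    rw [hE, hS, hA]
    ring
  rw [Finset.sum_congr rfl step1, Finset.sum_add_distrib, Finset.sum_add_distrib,
    Finset.sum_add_distrib, Finset.sum_const, ← Finset.mul_sum, ← Finset.mul_sum,
    ← Finset.mul_sum, sum_prod_lemma (fun i => ξ i ^ 2) d, sum_prod_lemma d d,
    sum_pairs (fun i k => ξ i ^ 2 * ξ k ^ 2 * (d k - d i) ^ 2) (fun i => by ring),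
    Finset.card_powersetCard, Finset.card_univ, Fintype.card_fin, nsmul_eq_mul]
  have hN : ((n.choose p : ℕ) : ℝ) = (C (n : ℤ) (p : ℤ) : ℝ) := by
    rw [C_np]
    push_cast
    ring
  rw [hN]
  have hW2 : ∑ i, ∑ k, ξ i ^ 2 * ξ k ^ 2 * (d k - d i) ^ 2
      = 2 * ((∑ i, ξ i ^ 2) * (∑ i, d i ^ 2 * ξ i ^ 2))
        - 2 * ((∑ i, d i * ξ i ^ 2) * (∑ i, d i * ξ i ^ 2)) := by
    have inner : ∀ i : Fin n, ∑ k, ξ i ^ 2 * ξ k ^ 2 * (d k - d i) ^ 2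
        = (∑ k, d k ^ 2 * ξ k ^ 2) * ξ i ^ 2
          - (∑ k, d k * ξ k ^ 2) * (2 * (d i * ξ i ^ 2))
          + (∑ k, ξ k ^ 2) * (d i ^ 2 * ξ i ^ 2) := by
      intro i
      rw [Finset.sum_mul, Finset.sum_mul, Finset.sum_mul, ← Finset.sum_sub_distrib,
        ← Finset.sum_add_distrib]
      exact Finset.sum_congr rfl fun k _ => by ring
    rw [Finset.sum_congr rfl fun i _ => inner i, Finset.sum_add_distrib,
      Finset.sum_sub_distrib, ← Finset.mul_sum, ← Finset.mul_sum, ← Finset.mul_sum,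
      ← Finset.mul_sum]
    ring
  rw [hW2]
  have e1 : ∑ x, ξ x ^ 2 * d x = ∑ x, d x * ξ x ^ 2 :=
    Finset.sum_congr rfl fun x _ => by ring
  have e2 : (∑ x, d x * d x) = ∑ x, d x ^ 2 :=
    Finset.sum_congr rfl fun x _ => by ring
  rw [e1, e2]
  ring
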